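/- For all real x > 0, y ≥ 0, z > 0, setting w = y(z-1)²/(2x), the continuous extension of the Pochhammer symbol satisfies r̃(x,y,z) = x^z · e^w · Γ(z,w)/Γ(z) = x^z e^w − ( y^z ((z-1)²)^z / 2^z ) · Σ_{k=0}^{∞} y^k (z-1)^{2k} / ( 2^k x^k Γ(z+k+1) ), the series on the right being absolutely convergent. -/

import Mathlib

open MeasureTheory Set Filter Topology

/-- The upper incomplete gamma function `Γ(z,x) = ∫_x^∞ t^{z-1} e^{-t} dt`. -/
noncomputable def upperGamma (z x : ℝ) : ℝ :=
  ∫ t in Set.Ioi x, t ^ (z - 1) * Real.exp (-t)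

/-- The continuous extension of the Pochhammer analogue:
`r̃(x,y,z) = x^z e^w Γ(z,w)/Γ(z)` where `w = y(z-1)²/(2x)`. -/
noncomputable def rtildeExt (x y z : ℝ) : ℝ :=
  x ^ z * Real.exp (y * (z - 1) ^ 2 / (2 * x)) *
    upperGamma z (y * (z - 1) ^ 2 / (2 * x)) / Real.Gamma z

noncomputable def lowG (z w : ℝ) : ℝ := ∫ t in (0:ℝ)..w, Real.exp (-t) * t ^ (z - 1)

lemma lowG_ofReal (z : ℝ) {w : ℝ} (hw : 0 ≤ w) : ((lowG z w : ℝ) : ℂ) = Complex.partialGamma z w := by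
  rw [Complex.partialGamma, lowG, ← intervalIntegral.integral_ofReal]
  refine intervalIntegral.integral_congr_ae (Filter.Eventually.of_forall fun t ht => ?_)
  rw [Set.uIoc_of_le hw] at ht
  push_cast
  rw [Complex.ofReal_cpow ht.1.le]
  push_cast
  ring

lemma lowG_succ {z : ℝ} (hz : 0 < z) {w : ℝ} (hw : 0 ≤ w) :
    lowG (z + 1) w = z * lowG z w - Real.exp (-w) * w ^ z := by
  have h := Complex.partialGamma_add_one (s := (z:ℂ)) (by simpa using hz) hw
  rw [← lowG_ofReal z hw, ← Complex.ofReal_cpow hw] at h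
  have h2 : ((z:ℂ) + 1) = ((z + 1 : ℝ) : ℂ) := by push_cast; ring
  rw [h2, ← lowG_ofReal (z+1) hw] at h
  exact_mod_cast h

lemma gamma_split {z : ℝ} (hz : 0 < z) {w : ℝ} (hw : 0 ≤ w) :
    Real.Gamma z = lowG z w + upperGamma z w := by
  have hI := Real.GammaIntegral_convergent hz
  rw [Real.Gamma_eq_integral hz, ← Set.Ioc_union_Ioi_eq_Ioi hw,
    setIntegral_union (Set.Ioc_disjoint_Ioi le_rfl) measurableSet_Ioi
      (hI.mono_set Set.Ioc_subset_Ioi_self) (hI.mono_set (Set.Ioi_subset_Ioi hw))]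
  congr 1
  · rw [lowG, intervalIntegral.integral_of_le hw]
  · rw [upperGamma]
    exact setIntegral_congr_fun measurableSet_Ioi fun t _ => mul_comm _ _

lemma lowG_nonneg {z w : ℝ} (hw : 0 ≤ w) : 0 ≤ lowG z w :=
  intervalIntegral.integral_nonneg hw fun t ht => mul_nonneg (Real.exp_pos _).le (Real.rpow_nonneg ht.1 _)

lemma lowG_partial {z : ℝ} (hz : 0 < z) {w : ℝ} (hw : 0 ≤ w) (n : ℕ) :
    lowG z w = Real.exp (-w) * w ^ z * Real.Gamma z *
        (∑ k ∈ Finset.range n, w ^ k / Real.Gamma (z + k + 1))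
      + Real.Gamma z / Real.Gamma (z + n) * lowG (z + n) w := by
  induction n with
  | zero =>
    simp [div_self (Real.Gamma_pos_of_pos hz).ne']
  | succ n ih =>
    have hzn : 0 < z + n := by positivity
    have hG : Real.Gamma (z + n + 1) = (z + n) * Real.Gamma (z + n) :=
      Real.Gamma_add_one hzn.ne'
    have hGp := Real.Gamma_pos_of_pos hzn
    have hGp1 := Real.Gamma_pos_of_pos (by positivity : (0:ℝ) < z + n + 1)
    have hrec := lowG_succ hzn hw
    have hwzn : w ^ (z + n) = w ^ z * w ^ n := by
      rw [Real.rpow_add' hw (by positivity), Real.rpow_natCast]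
    have hc1 : (z + ((n:ℝ) + 1)) = (z + n) + 1 := by ring
    rw [ih, Finset.sum_range_succ]
    push_cast
    rw [hc1, hrec]
    have h1 : z + (n:ℝ) + 1 ≠ 0 := by positivity
    field_simp [hG]
    ring_nf
    rw [hwzn]
    rw [show (1 + z + (n:ℝ)) = z + n + 1 by ring, hG]
    ring

lemma summable_aux {z : ℝ} (hz : 0 < z) {w : ℝ} (hw : 0 ≤ w) :
    Summable fun k : ℕ => w ^ k / Real.Gamma (z + k + 1) := by
  refine summable_of_ratio_norm_eventually_le (r := 1/2) (by norm_num) ?_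
  filter_upwards [Filter.eventually_atTop.2 ⟨⌈2 * w⌉₊, fun k hk => Nat.ceil_le.mp hk⟩]
    with k hk
  have hzk : (0:ℝ) < z + k + 1 := by positivity
  have hG1 : Real.Gamma (z + (k+1:ℕ) + 1) = (z + k + 1) * Real.Gamma (z + k + 1) := by
    push_cast
    rw [show z + ((k:ℝ) + 1) + 1 = (z + k + 1) + 1 by ring,
      Real.Gamma_add_one hzk.ne']
  have hGp := Real.Gamma_pos_of_pos (show (0:ℝ) < z + k + 1 by positivity)
  rw [Real.norm_eq_abs, Real.norm_eq_abs, abs_of_nonneg (by positivity),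
    abs_of_nonneg (by positivity), hG1, pow_succ, mul_comm (w^k) w,
    show w * w ^ k / ((z + k + 1) * Real.Gamma (z + k + 1))
      = (w / (z + k + 1)) * (w ^ k / Real.Gamma (z + k + 1)) by
        rw [div_mul_div_comm]]
  have h2 : w / (z + k + 1) ≤ 1 / 2 := by
    rw [div_le_div_iff₀ hzk (by norm_num)]
    nlinarith
  exact mul_le_mul_of_nonneg_right h2 (by positivity)

lemma remainder_le {z : ℝ} (hz : 0 < z) {w : ℝ} (hw : 0 ≤ w) (n : ℕ) :
    Real.Gamma z / Real.Gamma (z + n) * lowG (z + n) w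
      ≤ Real.Gamma z * w ^ z * (w ^ n / Real.Gamma (z + n + 1)) := by
  have hzn : (0:ℝ) < z + n := by positivity
  have hGp := Real.Gamma_pos_of_pos hzn
  have hb : lowG (z + n) w ≤ w ^ (z + n) / (z + n) := by
    have hint : ∫ t in (0:ℝ)..w, t ^ (z + n - 1) = w ^ (z + n) / (z + n) := by
      rw [integral_rpow (Or.inl (by linarith))]
      rw [sub_add_cancel, Real.zero_rpow hzn.ne', sub_zero]
    rw [← hint, lowG]
    refine intervalIntegral.integral_mono_on hw ?_
      (intervalIntegral.intervalIntegrable_rpow' (by linarith)) fun t ht => ?_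
    · rw [intervalIntegrable_iff, uIoc_of_le hw]
      exact (Real.GammaIntegral_convergent hzn).mono_set Set.Ioc_subset_Ioi_self
    · exact mul_le_of_le_one_left (Real.rpow_nonneg ht.1 _)
        (Real.exp_le_one_iff.mpr (by linarith [ht.1]))
  have hG1 : Real.Gamma (z + n + 1) = (z + n) * Real.Gamma (z + n) :=
    Real.Gamma_add_one hzn.ne'
  have hwzn : w ^ (z + (n:ℝ)) = w ^ z * w ^ n := by
    rw [Real.rpow_add' hw (by positivity), Real.rpow_natCast]
  calc Real.Gamma z / Real.Gamma (z + n) * lowG (z + n) w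
      ≤ Real.Gamma z / Real.Gamma (z + n) * (w ^ (z + n) / (z + n)) := by
        refine mul_le_mul_of_nonneg_left hb (by positivity)
    _ = Real.Gamma z * w ^ z * (w ^ n / Real.Gamma (z + n + 1)) := by
        rw [hG1, hwzn]; field_simp

lemma lowG_eq_tsum {z : ℝ} (hz : 0 < z) {w : ℝ} (hw : 0 ≤ w) :
    lowG z w = Real.exp (-w) * w ^ z * Real.Gamma z *
      ∑' k : ℕ, w ^ k / Real.Gamma (z + k + 1) := by
  set c := Real.exp (-w) * w ^ z * Real.Gamma z with hc
  have hsum := summable_aux hz hw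
  have h1 : Filter.Tendsto
      (fun n => c * ∑ k ∈ Finset.range n, w ^ k / Real.Gamma (z + k + 1))
      Filter.atTop (𝓝 (c * ∑' k : ℕ, w ^ k / Real.Gamma (z + k + 1))) :=
    (hsum.hasSum.tendsto_sum_nat).const_mul c
  have hrem : Filter.Tendsto
      (fun n : ℕ => Real.Gamma z / Real.Gamma (z + n) * lowG (z + n) w)
      Filter.atTop (𝓝 0) := by
    refine squeeze_zero (fun n => ?_) (fun n => remainder_le hz hw n) ?_
    · have := Real.Gamma_pos_of_pos (show (0:ℝ) < z + n by positivity)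
      have := lowG_nonneg (z := z + n) hw
      have := Real.Gamma_pos_of_pos hz
      positivity
    · simpa using (hsum.tendsto_atTop_zero).const_mul (Real.Gamma z * w ^ z)
  have h2 : Filter.Tendsto
      (fun n => c * ∑ k ∈ Finset.range n, w ^ k / Real.Gamma (z + k + 1))
      Filter.atTop (𝓝 (lowG z w)) := by
    have heq : (fun n => c * ∑ k ∈ Finset.range n, w ^ k / Real.Gamma (z + k + 1))
        = fun n : ℕ => lowG z w - Real.Gamma z / Real.Gamma (z + n) * lowG (z + n) w := by
      funext n
      have := lowG_partial hz hw n
      simp only [hc]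
      linarith
    rw [heq]
    simpa using tendsto_const_nhds.sub hrem
  exact tendsto_nhds_unique h2 h1

/-- For `x > 0`, `y ≥ 0`, `z > 0`, with `w = y(z-1)²/(2x)`:
`r̃(x,y,z) = x^z e^w − (y^z ((z-1)²)^z / 2^z) Σ_{k=0}^{∞} y^k (z-1)^{2k}/(2^k x^k Γ(z+k+1))`,
the series being absolutely convergent. -/
theorem rtildeExt_eq_series (x y z : ℝ) (hx : 0 < x) (hy : 0 ≤ y) (hz : 0 < z) :
    (Summable fun k : ℕ =>
      |y ^ k * (z - 1) ^ (2 * k) / (2 ^ k * x ^ k * Real.Gamma (z + k + 1))|) ∧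
    rtildeExt x y z =
      x ^ z * Real.exp (y * (z - 1) ^ 2 / (2 * x)) -
        (y ^ z * ((z - 1) ^ 2) ^ z / (2 : ℝ) ^ z) *
          ∑' k : ℕ, y ^ k * (z - 1) ^ (2 * k) / (2 ^ k * x ^ k * Real.Gamma (z + k + 1)) := by
  set w := y * (z - 1) ^ 2 / (2 * x) with hwdef
  have hw : 0 ≤ w := by positivity
  have hterm : ∀ k : ℕ, y ^ k * (z - 1) ^ (2 * k) / (2 ^ k * x ^ k * Real.Gamma (z + k + 1))
      = w ^ k / Real.Gamma (z + k + 1) := by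
    intro k
    rw [hwdef, div_pow, mul_pow, mul_pow, pow_mul, ← pow_mul, div_div]
  have hsum := summable_aux hz hw
  constructor
  · refine hsum.congr fun k => ?_
    have hGp := Real.Gamma_pos_of_pos (show (0:ℝ) < z + k + 1 by positivity)
    rw [hterm k, abs_of_nonneg (by positivity)]
  · have htsum : (∑' k : ℕ, y ^ k * (z - 1) ^ (2 * k) /
        (2 ^ k * x ^ k * Real.Gamma (z + k + 1)))
        = ∑' k : ℕ, w ^ k / Real.Gamma (z + k + 1) := tsum_congr hterm
    have hGz := Real.Gamma_pos_of_pos hz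
    have hxz := Real.rpow_pos_of_pos hx z
    have hsplit := gamma_split hz hw
    have hlow := lowG_eq_tsum hz hw
    have hxw : x ^ z * w ^ z = y ^ z * ((z - 1) ^ 2) ^ z / (2:ℝ) ^ z := by
      rw [hwdef, Real.div_rpow (by positivity) (by positivity),
        Real.mul_rpow hy (sq_nonneg _), Real.mul_rpow (by norm_num) hx.le]
      field_simp
    have hxw2 : x ^ z * w ^ z * (2:ℝ) ^ z = y ^ z * ((z - 1) ^ 2) ^ z := by
      rw [hxw]
      field_simp
    rw [rtildeExt, htsum, ← hwdef]
    rw [show upperGamma z w = Real.Gamma z - lowG z w by linarith, hlow]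
    have hee : Real.exp w * Real.exp (-w) = 1 := by
      rw [← Real.exp_add]; simp
    field_simp
    linear_combination (-((∑' (k : ℕ), w ^ k / Real.Gamma (z + ↑k + 1)) *
        (2:ℝ) ^ z * (x ^ z * w ^ z))) * hee +
      (-((∑' (k : ℕ), w ^ k / Real.Gamma (z + ↑k + 1)))) * hxw2
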